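/- arXiv:1108.6000 — 3 statements merged into one kernel-verified Lean document; each statement's English description precedes it below -/
import Mathlib

section
/- Let q ≥ 1 and 0 < r < 1. Let (φ_{s,t} : 𝔹^q → 𝔹^q)_{0≤s≤t} be a family of univalent maps with φ_{s,s} = id and φ_{s,t} = φ_{u,t} ∘ φ_{s,u} for all 0 ≤ s ≤ u ≤ t. Let (u_n)_{n∈ℕ} be an increasing sequence in [0,∞) tending to ∞ such that φ_{u_n,u_m}(r𝔹^q) ⊆ r𝔹^q for all n ≤ m, and assume that for every s ≥ 0, φ_{s,t} → 0 uniformly on compact subsets of 𝔹^q as t → ∞. Let (ψ_n : r𝔹^q → ℂ^q)_{n∈ℕ} be univalent maps satisfying ψ_n = ψ_{n+1} ∘ φ_{u_n,u_{n+1}} on r𝔹^q for all n. Then: (1) for every s ≥ 0 and every compact K ⊂ 𝔹^q there is N ∈ ℕ such that for all m ≥ N one has φ_{s,u_m}(K) ⊂ r𝔹^q and ψ_m ∘ φ_{s,u_m} = ψ_N ∘ φ_{s,u_N} on K; (2) the maps f_s : 𝔹^q → ℂ^q defined by f_s(z) := lim_{m→∞} ψ_m(φ_{s,u_m}(z)) are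 univalent and satisfy f_s = f_t ∘ φ_{s,t} for all 0 ≤ s ≤ t; (3) ⋃_{t≥0} f_t(𝔹^q) = ⋃_{n∈ℕ} ψ_n(r𝔹^q). -/
open Metric MeasureTheory Set Filter

noncomputable section

/-- `ℂ^q` with its standard Hermitian inner product. -/
abbrev Cq (q : ℕ) := EuclideanSpace ℂ (Fin q)

/-- `Re⟨x, y⟩` for the standard Hermitian product on `ℂ^q`. -/
def reInner {q : ℕ} (x y : Cq q) : ℝ := (inner ℂ x y : ℂ).re

/-- `m(A) = min {Re⟨Az,z⟩ : |z| = 1}`. -/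
def mA {q : ℕ} (A : Cq q →L[ℂ] Cq q) : ℝ :=
  sInf {x : ℝ | ∃ z : Cq q, ‖z‖ = 1 ∧ x = reInner (A z) z}

/-- `k(A) = max {Re⟨Az,z⟩ : |z| = 1}`. -/
def kA {q : ℕ} (A : Cq q →L[ℂ] Cq q) : ℝ :=
  sSup {x : ℝ | ∃ z : Cq q, ‖z‖ = 1 ∧ x = reInner (A z) z}

instance {q : ℕ} : MeasurableSpace (Cq q) := borel _
instance {q : ℕ} : BorelSpace (Cq q) := ⟨rfl⟩

/-- A map is univalent on `U` if it is holomorphic and injective there. -/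
def IsUnivalentOn {q : ℕ} (f : Cq q → Cq q) (U : Set (Cq q)) : Prop :=
  DifferentiableOn ℂ f U ∧ InjOn f U

/-- `-h` is a Herglotz vector field of order `∞` on the unit ball `𝔹^q`. -/
def IsHerglotz (q : ℕ) (h : Cq q → ℝ → Cq q) : Prop :=
  (∀ z ∈ ball (0 : Cq q) 1, Measurable fun t : ℝ => h z t) ∧
  (∀ᵐ t ∂(volume.restrict (Ici (0:ℝ))),
    DifferentiableOn ℂ (fun z => h z t) (ball (0 : Cq q) 1) ∧
    ∀ z₀ ∈ ball (0 : Cq q) 1, ∃ x : ℝ → Cq q, x 0 = z₀ ∧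
      ∀ s ∈ Ici (0:ℝ), x s ∈ ball (0 : Cq q) 1 ∧
        HasDerivWithinAt x (-(h (x s) t)) (Ici 0) s) ∧
  (∀ K ⊆ ball (0 : Cq q) 1, IsCompact K → ∀ T > 0, ∃ c > 0,
    ∀ z ∈ K, ∀ t ∈ Icc (0:ℝ) T, ‖h z t‖ ≤ c)

/-- `(f_t)` is a locally Lipschitz solution of the Loewner PDE
`∂f_t(z)/∂t = Df_t(z)·h(z,t)`. -/
def IsLoewnerSolution (q : ℕ) (h : Cq q → ℝ → Cq q) (f : ℝ → Cq q → Cq q) : Prop :=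
  (∀ K ⊆ ball (0 : Cq q) 1, IsCompact K → ∀ T > 0, ∃ k > 0,
    ∀ z ∈ K, ∀ s t : ℝ, 0 ≤ s → s ≤ t → t ≤ T → ‖f t z - f s z‖ ≤ k * (t - s)) ∧
  (∀ᵐ t ∂(volume.restrict (Ici (0:ℝ))), ∀ z ∈ ball (0 : Cq q) 1,
    HasDerivAt (fun τ => f τ z) (fderiv ℂ (f t) z (h z t)) t)

/-- A locally Lipschitz univalent solution of the Loewner PDE. -/
def IsUnivalentSolution (q : ℕ) (h : Cq q → ℝ → Cq q) (f : ℝ → Cq q → Cq q) : Prop :=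
  (∀ t ∈ Ici (0:ℝ), IsUnivalentOn (f t) (ball 0 1)) ∧ IsLoewnerSolution q h f

/-- The range `⋃_{t ≥ 0} f_t(𝔹^q)` of a solution. -/
def LoewnerRange (q : ℕ) (f : ℝ → Cq q → Cq q) : Set (Cq q) :=
  ⋃ t ∈ Ici (0:ℝ), f t '' ball 0 1

/-- `Ω ⊆ ℂ^q` is biholomorphic to `ℂ^q`. -/
def BiholoToCq (q : ℕ) (Ω : Set (Cq q)) : Prop :=
  ∃ (Φ Ψ : Cq q → Cq q), DifferentiableOn ℂ Φ Ω ∧ Differentiable ℂ Ψ ∧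
    (∀ x ∈ Ω, Ψ (Φ x) = x) ∧ (∀ y : Cq q, Ψ y ∈ Ω ∧ Φ (Ψ y) = y)

/-- The class `𝒩` of holomorphic `g : 𝔹^q → ℂ^q` with `g(0) = 0` and
`Re⟨g(z),z⟩ > 0` for `z ≠ 0`. -/
def MemN (q : ℕ) (g : Cq q → Cq q) : Prop :=
  DifferentiableOn ℂ g (ball 0 1) ∧ g 0 = 0 ∧
    ∀ z ∈ ball (0 : Cq q) 1, z ≠ 0 → 0 < reInner (g z) z

/-- `h(z,t) = A(t)z + O(|z|²)`: for each `t ≥ 0`, `z ↦ h(z,t)` is holomorphic on `𝔹^q`,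
vanishes at `0`, and has differential `A(t)` at `0`. -/
def HasLinearPart (q : ℕ) (h : Cq q → ℝ → Cq q) (A : ℝ → (Cq q →L[ℂ] Cq q)) : Prop :=
  ∀ t ∈ Ici (0:ℝ), DifferentiableOn ℂ (fun z => h z t) (ball (0 : Cq q) 1) ∧
    h 0 t = 0 ∧ fderiv ℂ (fun z => h z t) 0 = A t

/-- Construction of the Loewner chain from the univalent maps on the abstract basin:
the limits `f_s(z) = lim_m ψ_m(φ_{s,u_m}(z))` exist, are univalent, satisfy
`f_s = f_t ∘ φ_{s,t}`, and `⋃_{t≥0} f_t(𝔹^q) = ⋃_n ψ_n(r𝔹^q)`. -/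
theorem statement9 (q : ℕ) (hq : 1 ≤ q) (r : ℝ) (hr0 : 0 < r) (hr1 : r < 1)
    (φ : ℝ → ℝ → Cq q → Cq q)
    (hev1 : ∀ s t : ℝ, 0 ≤ s → s ≤ t → IsUnivalentOn (φ s t) (ball (0 : Cq q) 1) ∧
      MapsTo (φ s t) (ball (0 : Cq q) 1) (ball (0 : Cq q) 1))
    (hev2 : ∀ s ∈ Ici (0:ℝ), ∀ z ∈ ball (0 : Cq q) 1, φ s s z = z)
    (hev3 : ∀ s u t : ℝ, 0 ≤ s → s ≤ u → u ≤ t → ∀ z ∈ ball (0 : Cq q) 1,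
      φ s t z = φ u t (φ s u z))
    (u : ℕ → ℝ) (hu0 : ∀ n, 0 ≤ u n) (humono : StrictMono u)
    (hutop : Tendsto u atTop atTop)
    (hur : ∀ n m : ℕ, n ≤ m →
      MapsTo (φ (u n) (u m)) (ball (0 : Cq q) r) (ball (0 : Cq q) r))
    (hconv : ∀ s ∈ Ici (0:ℝ), ∀ K ⊆ ball (0 : Cq q) 1, IsCompact K →
      TendstoUniformlyOn (fun t z => φ s t z) (fun _ => 0) atTop K)
    (ψ : ℕ → Cq q → Cq q)
    (hψuniv : ∀ n : ℕ, IsUnivalentOn (ψ n) (ball (0 : Cq q) r))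
    (hψ : ∀ n : ℕ, ∀ z ∈ ball (0 : Cq q) r, ψ n z = ψ (n + 1) (φ (u n) (u (n + 1)) z)) :
    (∀ s ∈ Ici (0:ℝ), ∀ K ⊆ ball (0 : Cq q) 1, IsCompact K → ∃ N : ℕ, ∀ m ≥ N,
      (∀ z ∈ K, φ s (u m) z ∈ ball (0 : Cq q) r) ∧
      ∀ z ∈ K, ψ m (φ s (u m) z) = ψ N (φ s (u N) z)) ∧
    ∃ f : ℝ → Cq q → Cq q,
      (∀ s ∈ Ici (0:ℝ), ∀ z ∈ ball (0 : Cq q) 1,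
        Tendsto (fun m : ℕ => ψ m (φ s (u m) z)) atTop (nhds (f s z))) ∧
      (∀ s ∈ Ici (0:ℝ), IsUnivalentOn (f s) (ball (0 : Cq q) 1)) ∧
      (∀ s t : ℝ, 0 ≤ s → s ≤ t → ∀ z ∈ ball (0 : Cq q) 1, f s z = f t (φ s t z)) ∧
      (⋃ t ∈ Ici (0:ℝ), f t '' ball (0 : Cq q) 1) =
        ⋃ n : ℕ, ψ n '' ball (0 : Cq q) r := by

  have hrball : ball (0 : Cq q) r ⊆ ball (0 : Cq q) 1 := ball_subset_ball hr1.le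
  -- Key iterated relation: ψ m ∘ φ_{u n, u m} = ψ n on the r-ball.
  have key : ∀ n m : ℕ, n ≤ m → ∀ x ∈ ball (0 : Cq q) r,
      ψ m (φ (u n) (u m) x) = ψ n x := by
    intro n m hnm
    induction m, hnm using Nat.le_induction with
    | base => intro x hx; rw [hev2 (u n) (hu0 n) x (hrball hx)]
    | succ m hnm ih =>
      intro x hx
      have h1 : φ (u n) (u (m+1)) x = φ (u m) (u (m+1)) (φ (u n) (u m) x) :=
        hev3 (u n) (u m) (u (m+1)) (hu0 n) (humono.monotone hnm)
          (humono (Nat.lt_succ_self m)).le x (hrball hx)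
      rw [h1, ← hψ m _ (hur n m hnm hx), ih x hx]
  -- Part 1, strengthened with `s ≤ u N`.
  have part1' : ∀ s ∈ Ici (0:ℝ), ∀ K ⊆ ball (0 : Cq q) 1, IsCompact K → ∃ N : ℕ,
      s ≤ u N ∧ ∀ m ≥ N,
      (∀ z ∈ K, φ s (u m) z ∈ ball (0 : Cq q) r) ∧
      ∀ z ∈ K, ψ m (φ s (u m) z) = ψ N (φ s (u N) z) := by
    intro s hs K hK hKc
    have hev := (Metric.tendstoUniformlyOn_iff.mp (hconv s hs K hK hKc)) r hr0
    rw [eventually_atTop] at hev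
    obtain ⟨t₀, ht₀⟩ := hev
    obtain ⟨N, hN⟩ := eventually_atTop.mp (hutop.eventually_ge_atTop (max t₀ s))
    have hball : ∀ m ≥ N, ∀ z ∈ K, φ s (u m) z ∈ ball (0 : Cq q) r := by
      intro m hm z hz
      have := ht₀ (u m) (le_trans (le_max_left _ _) (hN m hm)) z hz
      rw [mem_ball, dist_eq_norm, sub_zero]
      simpa [dist_eq_norm] using this
    have hsN : s ≤ u N := le_trans (le_max_right _ _) (hN N le_rfl)
    refine ⟨N, hsN, fun m hm => ⟨hball m hm, fun z hz => ?_⟩⟩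
    have hzb : z ∈ ball (0 : Cq q) 1 := hK hz
    have h1 : φ s (u m) z = φ (u N) (u m) (φ s (u N) z) :=
      hev3 s (u N) (u m) hs hsN (humono.monotone hm) z hzb
    rw [h1, key N m hm _ (hball N le_rfl z hz)]
  constructor
  · intro s hs K hK hKc
    obtain ⟨N, _, hN⟩ := part1' s hs K hK hKc
    exact ⟨N, hN⟩
  -- define f via limits
  set f : ℝ → Cq q → Cq q := fun s z => limUnder atTop (fun m : ℕ => ψ m (φ s (u m) z))
    with hf
  have hval : ∀ (s : ℝ) (z : Cq q) (N : ℕ) (c : Cq q),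
      (∀ m ≥ N, ψ m (φ s (u m) z) = c) → f s z = c := by
    intro s z N c h
    have ht : Tendsto (fun m : ℕ => ψ m (φ s (u m) z)) atTop (nhds c) :=
      Tendsto.congr' (eventually_atTop.mpr ⟨N, fun m hm => (h m hm).symm⟩)
        tendsto_const_nhds
    exact ht.limUnder_eq
  have hpt : ∀ s ∈ Ici (0:ℝ), ∀ z ∈ ball (0 : Cq q) 1, ∃ N : ℕ, s ≤ u N ∧
      (∀ m ≥ N, φ s (u m) z ∈ ball (0 : Cq q) r ∧
        ψ m (φ s (u m) z) = ψ N (φ s (u N) z)) ∧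
      f s z = ψ N (φ s (u N) z) := by
    intro s hs z hz
    obtain ⟨N, hsN, hN⟩ := part1' s hs {z} (singleton_subset_iff.mpr hz)
      isCompact_singleton
    exact ⟨N, hsN, fun m hm => ⟨(hN m hm).1 z rfl, (hN m hm).2 z rfl⟩,
      hval s z N _ (fun m hm => (hN m hm).2 z rfl)⟩
  refine ⟨f, ?_, ?_, ?_, ?_⟩
  · -- convergence
    intro s hs z hz
    obtain ⟨N, hsN, hN, hfz⟩ := hpt s hs z hz
    rw [hfz]
    exact Tendsto.congr' (eventually_atTop.mpr ⟨N, fun m hm => ((hN m hm).2).symm⟩)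
      tendsto_const_nhds
  · -- univalence
    intro s hs
    constructor
    · intro z₀ hz₀
      have hz₀' : ‖z₀‖ < 1 := mem_ball_zero_iff.mp hz₀
      set ε : ℝ := (1 - ‖z₀‖) / 2 with hε
      have hεpos : 0 < ε := by rw [hε]; linarith
      have hKsub : closedBall z₀ ε ⊆ ball (0 : Cq q) 1 := by
        intro z hz
        rw [mem_ball_zero_iff]
        have h2 := mem_closedBall_iff_norm.mp hz
        calc ‖z‖ ≤ ‖z₀‖ + ‖z - z₀‖ := norm_le_insert' z z₀
        _ ≤ ‖z₀‖ + ε := by linarith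
        _ < 1 := by rw [hε] at h2 ⊢; linarith
      obtain ⟨N, hsN, hN⟩ := part1' s hs (closedBall z₀ ε) hKsub
        (isCompact_closedBall _ _)
      have hz₀K : z₀ ∈ closedBall z₀ ε := mem_closedBall_self hεpos.le
      have hφd : DifferentiableAt ℂ (φ s (u N)) z₀ :=
        ((hev1 s (u N) hs hsN).1.1.differentiableAt (isOpen_ball.mem_nhds hz₀))
      have hψd : DifferentiableAt ℂ (ψ N) (φ s (u N) z₀) :=
        (hψuniv N).1.differentiableAt
          (isOpen_ball.mem_nhds ((hN N le_rfl).1 z₀ hz₀K))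
      have hcomp : DifferentiableAt ℂ (fun z => ψ N (φ s (u N) z)) z₀ :=
        hψd.comp z₀ hφd
      have heq : f s =ᶠ[nhds z₀] fun z => ψ N (φ s (u N) z) := by
        filter_upwards [closedBall_mem_nhds z₀ hεpos] with z hz
        exact hval s z N _ (fun m hm => (hN m hm).2 z hz)
      exact (hcomp.congr_of_eventuallyEq heq).differentiableWithinAt
    · intro z₁ hz₁ z₂ hz₂ hfe
      have hKsub : ({z₁, z₂} : Set (Cq q)) ⊆ ball (0 : Cq q) 1 := by
        intro z hz
        rcases hz with h | h
        · exact h ▸ hz₁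
        · exact h ▸ hz₂
      obtain ⟨N, hsN, hN⟩ := part1' s hs {z₁, z₂} hKsub
        ((Set.toFinite _).isCompact)
      have hm1 : z₁ ∈ ({z₁, z₂} : Set (Cq q)) := by left; rfl
      have hm2 : z₂ ∈ ({z₁, z₂} : Set (Cq q)) := by right; rfl
      have e1 : f s z₁ = ψ N (φ s (u N) z₁) :=
        hval s z₁ N _ (fun m hm => (hN m hm).2 z₁ hm1)
      have e2 : f s z₂ = ψ N (φ s (u N) z₂) :=
        hval s z₂ N _ (fun m hm => (hN m hm).2 z₂ hm2)
      have hφeq : φ s (u N) z₁ = φ s (u N) z₂ :=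
        (hψuniv N).2 ((hN N le_rfl).1 z₁ hm1) ((hN N le_rfl).1 z₂ hm2)
          (by rw [← e1, ← e2, hfe])
      exact (hev1 s (u N) hs hsN).1.2 hz₁ hz₂ hφeq
  · -- semigroup
    intro s t hs hst z hz
    have ht : t ∈ Ici (0:ℝ) := le_trans hs hst
    have hw : φ s t z ∈ ball (0 : Cq q) 1 := (hev1 s t hs hst).2 hz
    obtain ⟨N, hsN, hN, e1⟩ := hpt s hs z hz
    obtain ⟨N', htN', hN', e2⟩ := hpt t ht (φ s t z) hw
    obtain ⟨M₀, hM₀⟩ := eventually_atTop.mp (hutop.eventually_ge_atTop t)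
    set M := max M₀ (max N N') with hM
    have hMN : N ≤ M := le_trans (le_max_left _ _) (le_max_right _ _)
    have hMN' : N' ≤ M := le_trans (le_max_right _ _) (le_max_right _ _)
    have htM : t ≤ u M := hM₀ M (le_max_left _ _)
    have hcomp : φ s (u M) z = φ t (u M) (φ s t z) :=
      hev3 s t (u M) hs hst htM z hz
    calc f s z = ψ M (φ s (u M) z) := by rw [(hN M hMN).2, ← e1]
    _ = ψ M (φ t (u M) (φ s t z)) := by rw [hcomp]
    _ = f t (φ s t z) := by rw [(hN' M hMN').2, ← e2]
  · -- range equality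
    ext w
    simp only [mem_iUnion, mem_image, mem_Ici, exists_prop]
    constructor
    · rintro ⟨t, ht, z, hz, hzw⟩
      obtain ⟨N, hsN, hN, hfv⟩ := hpt t ht z hz
      exact ⟨N, φ t (u N) z, (hN N le_rfl).1, by rw [← hfv, hzw]⟩
    · rintro ⟨n, x, hx, hxw⟩
      refine ⟨u n, hu0 n, x, hrball hx, ?_⟩
      rw [hval (u n) x n (ψ n x) (fun m hm => key n m hm x hx), hxw]
end
end

section
/- Let h ∈ 𝒩 and let A : ℂ^q → ℂ^q be the differential of h at 0. Then for every z ∈ 𝔹^q \ {0}: Re⟨Az,z⟩·(1−|z|)/(1+|z|) ≤ Re⟨h(z),z⟩ ≤ Re⟨Az,z⟩·(1+|z|)/(1−|z|). -/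
open Metric MeasureTheory Set Filter

noncomputable section

open Topology in
lemma harnack_core (g : ℂ → ℂ) (hg : DifferentiableOn ℂ g (ball 0 1))
    (hpos : ∀ w ∈ ball (0:ℂ) 1, w ≠ 0 → 0 < (g w).re)
    (r : ℝ) (hr0 : 0 < r) (hr1 : r < 1) :
    (g 0).re * ((1 - r) / (1 + r)) ≤ (g (r:ℂ)).re ∧
      (g (r:ℂ)).re ≤ (g 0).re * ((1 + r) / (1 - r)) := by
  have hrmem : (r:ℂ) ∈ ball (0:ℂ) 1 := by
    simp [mem_ball_zero_iff, abs_of_pos hr0, hr1, Complex.norm_of_nonneg hr0.le]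
  have hrne : (r:ℂ) ≠ 0 := by exact_mod_cast hr0.ne'
  have hx : 0 < (g (r:ℂ)).re := hpos _ hrmem hrne
  have h0mem : (0:ℂ) ∈ ball (0:ℂ) 1 := mem_ball_self one_pos
  have hgc : ContinuousAt g 0 :=
    (hg.differentiableAt (isOpen_ball.mem_nhds h0mem)).continuousAt
  have hα0 : 0 ≤ (g 0).re := by
    have ht : Tendsto (fun w => (g w).re) (𝓝[≠] (0:ℂ)) (𝓝 ((g 0).re)) :=
      (Complex.continuous_re.continuousAt.comp hgc).mono_left nhdsWithin_le_nhds
    refine ge_of_tendsto ht ?_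
    have h1 : ∀ᶠ w in 𝓝[≠] (0:ℂ), w ∈ ball (0:ℂ) 1 :=
      (Filter.eventually_of_mem (ball_mem_nhds _ one_pos) fun x hx => hx).filter_mono nhdsWithin_le_nhds
    have h2 : ∀ᶠ w in 𝓝[≠] (0:ℂ), w ≠ 0 := eventually_mem_nhdsWithin
    exact (h1.and h2).mono fun w ⟨hm, hne⟩ => (hpos w hm hne).le
  -- the value at 0 has strictly positive real part
  have hα : 0 < (g 0).re := by
    rcases hα0.lt_or_eq with hlt | heq
    · exact hlt
    -- maximum modulus contradiction
    exfalso
    set G : ℂ → ℂ := fun w => Complex.exp (-(g w)) with hGdef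
    have hGd : DifferentiableOn ℂ G (ball 0 1) := (hg.neg).cexp
    have hmax : IsMaxOn (norm ∘ G) (ball (0:ℂ) 1) 0 := by
      intro w hw
      simp only [Function.comp, hGdef, Complex.norm_exp,
        Complex.neg_re]
      have h1 : 0 ≤ (g w).re := by
        rcases eq_or_ne w 0 with rfl | hne
        · exact hα0
        · exact (hpos w hw hne).le
      have h2 : (g 0).re = 0 := heq.symm
      simp only [h2, neg_zero]
      exact Real.exp_le_exp.2 (by linarith)
    have heqOn := Complex.eqOn_of_isPreconnected_of_isMaxOn_norm
      (convex_ball (0:ℂ) 1).isPreconnected isOpen_ball hGd h0mem hmax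
    have := heqOn hrmem
    have hnorm : ‖G (r:ℂ)‖ = ‖G 0‖ := by rw [this]; rfl
    rw [hGdef] at hnorm
    simp only [Complex.norm_exp, Complex.neg_re] at hnorm
    have hre : (g (r:ℂ)).re = (g 0).re := by
      have := Real.exp_injective hnorm
      linarith
    rw [← heq] at hre
    linarith
  -- now the Möbius + Schwarz argument
  set a : ℂ := g 0 with ha_def
  have hrepos : ∀ w ∈ ball (0:ℂ) 1, 0 < (g w).re := by
    intro w hw
    rcases eq_or_ne w 0 with rfl | hne
    · exact hα
    · exact hpos w hw hne
  have hden : ∀ w ∈ ball (0:ℂ) 1, g w + (starRingEnd ℂ) a ≠ 0 := by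
    intro w hw hcontra
    have : (g w + (starRingEnd ℂ) a).re = 0 := by rw [hcontra]; rfl
    rw [Complex.add_re, Complex.conj_re] at this
    have := hrepos w hw
    linarith
  set φ : ℂ → ℂ := fun w => (g w - a) / (g w + (starRingEnd ℂ) a) with hφ_def
  have hφd : DifferentiableOn ℂ φ (ball 0 1) :=
    (hg.sub_const a).div (hg.add_const _) hden
  have hφ0 : φ 0 = 0 := by simp [hφ_def, ← ha_def]
  have hφmaps : MapsTo φ (ball (0:ℂ) 1) (ball (φ 0) 1) := by
    intro w hw
    rw [hφ0, mem_ball_zero_iff, hφ_def]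
    simp only [norm_div]
    rw [div_lt_one (norm_pos_iff.2 (hden w hw))]
    have hx' := hrepos w hw
    have hsq : ‖g w - a‖ ^ 2 < ‖g w + (starRingEnd ℂ) a‖ ^ 2 := by
      rw [Complex.sq_norm, Complex.sq_norm,
        Complex.normSq_apply, Complex.normSq_apply]
      simp only [Complex.add_re, Complex.add_im, Complex.sub_re, Complex.sub_im,
        Complex.conj_re, Complex.conj_im]
      nlinarith [hx', hα]

    exact lt_of_pow_lt_pow_left₀ 2 (norm_nonneg _) hsq
  have hschwarz := Complex.dist_le_div_mul_dist_of_mapsTo_ball hφd (hφmaps.mono_right ball_subset_closedBall) hrmem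
  rw [hφ0, dist_zero_right, dist_zero_right, Complex.norm_real,
    Real.norm_of_nonneg hr0.le, div_self one_ne_zero, one_mul] at hschwarz
  -- ‖φ r‖ ≤ r
  have hkey : ‖g (r:ℂ) - a‖ ≤ r * ‖g (r:ℂ) + (starRingEnd ℂ) a‖ := by
    have hd := hden _ hrmem
    have : ‖g (r:ℂ) - a‖ / ‖g (r:ℂ) + (starRingEnd ℂ) a‖ ≤ r := by
      rw [← norm_div]; exact hschwarz
    rwa [div_le_iff₀ (norm_pos_iff.2 hd)] at this
    
  have hsq : ‖g (r:ℂ) - a‖ ^ 2 ≤ r ^ 2 * ‖g (r:ℂ) + (starRingEnd ℂ) a‖ ^ 2 := by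
    have := pow_le_pow_left₀ (norm_nonneg _) hkey 2
    rwa [mul_pow] at this
  rw [Complex.sq_norm, Complex.sq_norm,
    Complex.normSq_apply, Complex.normSq_apply] at hsq
  simp only [Complex.add_re, Complex.add_im, Complex.sub_re, Complex.sub_im,
    Complex.conj_re, Complex.conj_im] at hsq
  set x := (g (r:ℂ)).re
  set y := (g (r:ℂ)).im
  set α := a.re
  set β := a.im
  have hrsq : (0:ℝ) ≤ 1 - r ^ 2 := by nlinarith
  have h3 : (x - α) ^ 2 ≤ r ^ 2 * (x + α) ^ 2 := by
    nlinarith [mul_nonneg hrsq (sq_nonneg (y - β))]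
  have hP : r * (x + α) > 0 := mul_pos hr0 (by linarith)
  constructor
  · rw [mul_comm, div_mul_eq_mul_div, div_le_iff₀ (by linarith : (0:ℝ) < 1 + r)]
    nlinarith [h3, hP, hx, hα]
  · rw [mul_comm, div_mul_eq_mul_div, le_div_iff₀ (by linarith : (0:ℝ) < 1 - r)]
    nlinarith [h3, hP, hx, hα]

/-- Gurganus' estimate: for `h ∈ 𝒩` with differential `A` at `0`,
`Re⟨Az,z⟩·(1-|z|)/(1+|z|) ≤ Re⟨h(z),z⟩ ≤ Re⟨Az,z⟩·(1+|z|)/(1-|z|)`. -/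
theorem statement12 (q : ℕ) (hq : 1 ≤ q) (h : Cq q → Cq q) (hN : MemN q h)
    (A : Cq q →L[ℂ] Cq q) (hA : fderiv ℂ h 0 = A) :
    ∀ z ∈ ball (0 : Cq q) 1, z ≠ 0 →
      reInner (A z) z * ((1 - ‖z‖) / (1 + ‖z‖)) ≤ reInner (h z) z ∧
      reInner (h z) z ≤ reInner (A z) z * ((1 + ‖z‖) / (1 - ‖z‖)) := by
  intro z hz hz0
  set r : ℝ := ‖z‖ with hr_def
  have hr0 : 0 < r := norm_pos_iff.2 hz0
  have hr1 : r < 1 := mem_ball_zero_iff.1 hz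
  set u : Cq q := ((r:ℂ))⁻¹ • z with hu_def
  have hu : ‖u‖ = 1 := by
    rw [hu_def, norm_smul, norm_inv, Complex.norm_real, Real.norm_of_nonneg hr0.le,
      inv_mul_cancel₀ hr0.ne']
  have hzu : (r:ℂ) • u = z := by
    rw [hu_def, smul_smul, mul_inv_cancel₀ (by exact_mod_cast hr0.ne'), one_smul]
  have hmapsto : ∀ w : ℂ, w ∈ ball (0:ℂ) 1 → w • u ∈ ball (0:Cq q) 1 := by
    intro w hw
    rw [mem_ball_zero_iff, norm_smul, hu, mul_one]
    exact mem_ball_zero_iff.1 hw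
  set ψ : ℂ → ℂ := fun w => (inner ℂ u (h (w • u)) : ℂ) with hψ_def
  have hψd : DifferentiableOn ℂ ψ (ball 0 1) := by
    have h1 : DifferentiableOn ℂ (fun w : ℂ => w • u) (ball 0 1) :=
      (differentiable_id.smul_const u).differentiableOn
    have h2 : DifferentiableOn ℂ (fun w : ℂ => h (w • u)) (ball 0 1) :=
      hN.1.comp h1 fun w hw => hmapsto w hw
    exact (innerSL ℂ u).differentiable.comp_differentiableOn h2
  have hψ0 : ψ 0 = 0 := by
    simp [hψ_def, hN.2.1]
  set g : ℂ → ℂ := dslope ψ 0 with hg_def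
  have hgd : DifferentiableOn ℂ g (ball 0 1) :=
    (Complex.differentiableOn_dslope (ball_mem_nhds _ one_pos)).mpr hψd
  have hψ_eq : ∀ w : ℂ, ψ w = w * g w := by
    intro w
    have := sub_smul_dslope ψ 0 w
    rw [hψ0, sub_zero, sub_zero] at this
    rw [← this, smul_eq_mul, hg_def]
  -- key identity
  have hkey : ∀ w : ℂ, reInner (h (w • u)) (w • u) = Complex.normSq w * (g w).re := by
    intro w
    have e1 : (inner ℂ (h (w • u)) (w • u) : ℂ) = w * (starRingEnd ℂ) (ψ w) := by
      rw [inner_smul_right, hψ_def, ← inner_conj_symm]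
    rw [reInner, e1, hψ_eq w, map_mul]
    have : w * ((starRingEnd ℂ) w * (starRingEnd ℂ) (g w)) =
        (Complex.normSq w : ℂ) * (starRingEnd ℂ) (g w) := by
      rw [← mul_assoc, Complex.mul_conj]
    rw [this]
    simp [Complex.conj_re]
  have hgpos : ∀ w ∈ ball (0:ℂ) 1, w ≠ 0 → 0 < (g w).re := by
    intro w hw hw0
    have hmem := hmapsto w hw
    have hne : w • u ≠ 0 := smul_ne_zero hw0 (by intro hu0; rw [hu0, norm_zero] at hu; linarith)
    have := hN.2.2 _ hmem hne
    rw [hkey w] at this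
    have hns : 0 < Complex.normSq w := Complex.normSq_pos.2 hw0
    nlinarith
  -- g 0 = ⟪u, A u⟫
  have hg0 : g 0 = (inner ℂ u (A u) : ℂ) := by
    have hL : HasDerivAt (fun w : ℂ => w • u) u 0 := by
      simpa using (hasDerivAt_id (0:ℂ)).smul_const u
    have hhd : DifferentiableAt ℂ h 0 :=
      hN.1.differentiableAt (isOpen_ball.mem_nhds (by simp))
    have hF : HasDerivAt (fun w : ℂ => h (w • u)) (A u) 0 := by
      have h0u : ((0:ℂ) • u) = (0 : Cq q) := zero_smul _ _
      have hfd : HasFDerivAt h (fderiv ℂ h 0) ((0:ℂ) • u) := h0u ▸ hhd.hasFDerivAt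
      have hc := hfd.comp_hasDerivAt (0:ℂ) hL
      rw [hA] at hc
      exact hc
    have hψderiv : HasDerivAt ψ ((inner ℂ u (A u) : ℂ)) 0 := by
      have := ((innerSL ℂ u).hasFDerivAt.comp_hasDerivAt 0 hF)
      simp only [innerSL_apply_apply] at this
      exact this
    rw [hg_def, dslope_same, hψderiv.deriv]
  -- translations
  have hAz : reInner (A z) z = r ^ 2 * (g 0).re := by
    have e2 : (inner ℂ (A u) u : ℂ) = (starRingEnd ℂ) (g 0) := by
      rw [hg0, ← inner_conj_symm]
    have e : (inner ℂ (A z) z : ℂ) = ((r ^ 2 : ℝ) : ℂ) * (starRingEnd ℂ) (g 0) := by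
      rw [← hzu, _root_.map_smul, inner_smul_left, inner_smul_right, e2, Complex.conj_ofReal]
      push_cast
      ring
    rw [reInner, e, Complex.re_ofReal_mul, Complex.conj_re]
  have hhz : reInner (h z) z = r ^ 2 * (g (r:ℂ)).re := by
    rw [← hzu, hkey, Complex.normSq_ofReal]
    ring
  have hmain := harnack_core g hgd hgpos r hr0 hr1
  constructor
  · rw [hAz, hhz, mul_assoc]
    exact mul_le_mul_of_nonneg_left hmain.1 (sq_nonneg r)
  · rw [hAz, hhz, mul_assoc]
    exact mul_le_mul_of_nonneg_left hmain.2 (sq_nonneg r)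
end
end

section
/- Let h ∈ 𝒩 and let A : ℂ^q → ℂ^q be the differential of h at 0. Then for every r with 0 ≤ r < 1 and every z ∈ 𝔹^q with |z| ≤ r one has |h(z)| ≤ 4r/(1−r)²·‖A‖, where ‖A‖ is the operator norm of A. -/
open Metric MeasureTheory Set Filter

noncomputable section

set_option maxHeartbeats 1000000
set_option synthInstance.maxHeartbeats 400000

open Complex

lemma poly_E {σ : ℝ} (h0 : 0 ≤ σ) (h1 : σ ≤ 1) :
    0 ≤ 4 - 7*σ + 4*σ^2 + 4*σ^3 - 8*σ^4 + 7*σ^5 - 2*σ^6 - 2*σ^7 + 2*σ^8 - σ^9 := by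
  nlinarith [sq_nonneg σ, sq_nonneg (1-σ), sq_nonneg (σ*(1-σ)), sq_nonneg (σ^2*(1-σ)),
    sq_nonneg (σ^3*(1-σ)), sq_nonneg (σ^4*(1-σ)), mul_nonneg h0 h0,
    pow_le_one₀ h0 h1 (n := 2), pow_le_one₀ h0 h1 (n := 9),
    mul_nonneg (mul_nonneg h0 h0) h0, pow_nonneg h0 3, pow_nonneg h0 5, pow_nonneg h0 7,
    pow_nonneg h0 9, mul_nonneg (pow_nonneg h0 5) (sub_nonneg.mpr h1),
    mul_nonneg (pow_nonneg h0 7) (sub_nonneg.mpr h1)]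

lemma key_ineq {ρ s : ℝ} (hρ0 : 0 < ρ) (hρ1 : ρ < 1) (hs0 : 0 < s)
    (hs2 : s^2 = 1 + (1-ρ)^2) :
    ρ * s * (2 + (1-ρ)^3) ≤ 1 + ρ := by
  have hE := poly_E (σ := 1-ρ) (by linarith) (by linarith)
  have hσE : 0 ≤ (1-ρ) * (4 - 7*(1-ρ) + 4*(1-ρ)^2 + 4*(1-ρ)^3 - 8*(1-ρ)^4 + 7*(1-ρ)^5
      - 2*(1-ρ)^6 - 2*(1-ρ)^7 + 2*(1-ρ)^8 - (1-ρ)^9) :=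
    mul_nonneg (by linarith) hE
  have hX : (ρ * s * (2 + (1-ρ)^3))^2 = ρ^2*(1+(1-ρ)^2)*(2+(1-ρ)^3)^2 := by
    have : (ρ * s * (2 + (1-ρ)^3))^2 = ρ^2*s^2*(2+(1-ρ)^3)^2 := by ring
    rw [this, hs2]
  have hsq : (ρ * s * (2 + (1-ρ)^3))^2 ≤ (1+ρ)^2 := by
    rw [hX]; nlinarith [hσE]
  have hpos : 0 < ρ * s * (2 + (1-ρ)^3) := by
    apply mul_pos (mul_pos hρ0 hs0); nlinarith
  nlinarith [hsq, hpos]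

lemma rho_s_lt_one {ρ s : ℝ} (hρ0 : 0 < ρ) (hρ1 : ρ < 1) (hs0 : 0 < s)
    (hs2 : s^2 = 1 + (1-ρ)^2) : ρ * s < 1 := by
  have h1 : (ρ*s)^2 < 1 := by
    have : (ρ*s)^2 = ρ^2*(1+(1-ρ)^2) := by rw [mul_pow, hs2]
    rw [this]
    nlinarith [mul_pos (show (0:ℝ)<1-ρ by linarith)
      (show (0:ℝ) < 1+ρ-ρ^2*(1-ρ) by
        nlinarith [sq_nonneg ρ, mul_nonneg (mul_nonneg hρ0.le hρ0.le) hρ0.le])]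
  nlinarith [sq_nonneg (1 - ρ*s), mul_pos hρ0 hs0]

lemma final_ineq {ρ s : ℝ} (hρ0 : 0 < ρ) (hρ1 : ρ < 1) (hs0 : 0 < s)
    (hs2 : s^2 = 1 + (1-ρ)^2) :
    2 + 2*ρ/(1-ρ) + 2*s^2*ρ/((1/s - ρ)*(1-ρ)) ≤ 4/(1-ρ)^2 := by
  have h1 : (0:ℝ) < 1 - ρ := by linarith
  have hρs := rho_s_lt_one hρ0 hρ1 hs0 hs2
  have h2 : (0:ℝ) < 1 - ρ*s := by linarith
  have key := key_ineq hρ0 hρ1 hs0 hs2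
  have key2 : s^3*ρ*(1-ρ) ≤ (1+ρ) - (1+ρ)*(ρ*s) := by
    have e : s^3*ρ*(1-ρ) + (1+ρ)*(ρ*s)
        = ρ*s*(2+(1-ρ)^3) + ρ*s*(1-ρ)*(s^2 - (1+(1-ρ)^2)) := by ring
    rw [hs2, sub_self, mul_zero, add_zero] at e
    linarith [key, e]
  have hrw : 1/s - ρ = (1-ρ*s)/s := by field_simp
  have e3 : 2*s^2*ρ/((1/s - ρ)*(1-ρ)) = 2*s^3*ρ/((1-ρ*s)*(1-ρ)) := by
    have hsne : s ≠ 0 := hs0.ne'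
    have hne1 : (1:ℝ) - ρ*s ≠ 0 := h2.ne'
    have hne2 : (1:ℝ) - ρ ≠ 0 := h1.ne'
    rw [hrw]
    field_simp
  have e4 : (4:ℝ)/(1-ρ)^2 - 2 - 2*ρ/(1-ρ) = (2+2*ρ)/(1-ρ)^2 := by
    field_simp
    ring
  have step : 2*s^3*ρ/((1-ρ*s)*(1-ρ)) ≤ (2+2*ρ)/(1-ρ)^2 := by
    rw [div_le_div_iff₀ (by positivity) (by positivity)]
    nlinarith [mul_le_mul_of_nonneg_left key2 (show (0:ℝ) ≤ 2*(1-ρ) by linarith)]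
  rw [e3]
  linarith [step, e4]

lemma mono_rhs {x y C : ℝ} (hx0 : 0 < x) (hxy : x ≤ y) (hy1 : y < 1) (hC : 0 ≤ C) :
    4*x/(1-x)^2*C ≤ 4*y/(1-y)^2*C := by
  apply mul_le_mul_of_nonneg_right _ hC
  rw [div_le_div_iff₀ (pow_pos (show (0:ℝ) < 1-x by linarith) 2)
    (pow_pos (show (0:ℝ) < 1-y by linarith) 2)]
  have hxy1 : x*y ≤ 1 := by nlinarith
  nlinarith [mul_nonneg (sub_nonneg.mpr hxy) (sub_nonneg.mpr hxy1)]

lemma extractQ {ε M : ℝ} (hε : 0 < ε) (P Q : ℂ → ℂ)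
    (hP : DifferentiableOn ℂ P (closedBall 0 ε))
    (hQ : DifferentiableOn ℂ Q (closedBall 0 ε))
    (hM : ∀ x : ℂ, ‖x‖ = ε → ‖P x + (starRingEnd ℂ) x * Q x‖ ≤ M) :
    ‖Q 0‖ ≤ M / ε := by
  set F : ℂ → ℂ := fun w => w * P w + (ε^2 : ℂ) * Q w with hF
  have hFd : DifferentiableOn ℂ F (closedBall 0 ε) :=
    (differentiableOn_id.mul hP).add ((differentiableOn_const _).mul hQ)
  have h0 : (0:ℂ) ∈ ball (0:ℂ) ε := by simpa using hε
  have hcauchy := hFd.circleIntegral_sub_inv_smul h0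
  have hbound : ∀ w ∈ sphere (0:ℂ) ε, ‖(w - 0)⁻¹ • F w‖ ≤ M := by
    intro w hw
    have hwn : ‖w‖ = ε := by simpa using hw
    have hw0 : w ≠ 0 := by
      intro h; rw [h] at hwn; simp at hwn; exact hε.ne hwn
    have hmc : w * (starRingEnd ℂ) w = (ε^2 : ℂ) := by
      rw [Complex.mul_conj', hwn]
    have : (w - 0)⁻¹ • F w = P w + (starRingEnd ℂ) w * Q w := by
      simp only [sub_zero, smul_eq_mul, hF]
      rw [← hmc]
      field_simp
    rw [this]; exact hM w hwn
  have hle := circleIntegral.norm_integral_le_of_norm_le_const hε.le hbound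
  rw [hcauchy] at hle
  have hnorm : ‖(2 * Real.pi * I : ℂ) • F 0‖ = 2 * Real.pi * (ε^2 * ‖Q 0‖) := by
    have : F 0 = (ε^2 : ℂ) * Q 0 := by simp [hF]
    rw [this, norm_smul]
    simp only [norm_mul, Complex.norm_I, Complex.norm_ofNat, Complex.norm_real,
      Real.norm_eq_abs, mul_one]
    rw [_root_.abs_of_nonneg Real.pi_pos.le,
      show ‖((ε:ℂ))^2‖ = ε^2 by
        rw [norm_pow, Complex.norm_real, Real.norm_eq_abs, _root_.abs_of_nonneg hε.le]]
  rw [hnorm] at hle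
  rw [le_div_iff₀ hε]
  have hπ := Real.pi_pos
  nlinarith [hle, mul_pos hπ hε]

lemma herglotz_pos {p : ℂ → ℂ} {R : ℝ}
    (hd : DifferentiableOn ℂ p (ball 0 R))
    (hre : ∀ w ∈ ball (0:ℂ) R, 0 < (p w).re)
    {ζ : ℂ} (hζ : ζ ∈ ball (0:ℂ) R) :
    ‖p ζ - p 0‖ ≤ 2 * (p 0).re * ‖ζ‖ / (R - ‖ζ‖) := by
  have hζR : ‖ζ‖ < R := by simpa [mem_ball, dist_eq_norm] using hζ
  have hR : 0 < R := lt_of_le_of_lt (norm_nonneg ζ) hζR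
  have h0b : (0:ℂ) ∈ ball (0:ℂ) R := by simpa using hR
  set c : ℂ := p 0 with hc
  have hcre : 0 < c.re := hre 0 h0b
  have hden : ∀ w ∈ ball (0:ℂ) R, p w + (starRingEnd ℂ) c ≠ 0 := by
    intro w hw hcontra
    have : (p w + (starRingEnd ℂ) c).re = (p w).re + c.re := by
      simp [Complex.add_re, Complex.conj_re]
    rw [hcontra] at this
    simp at this
    have := hre w hw
    linarith
  set g : ℂ → ℂ := fun w => (p w - c) / (p w + (starRingEnd ℂ) c) with hg
  have hgd : DifferentiableOn ℂ g (ball 0 R) := by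
    apply DifferentiableOn.div
    · exact hd.sub (differentiableOn_const _)
    · exact hd.add (differentiableOn_const _)
    · exact hden
  have hg0 : g 0 = 0 := by
    simp [hg, ← hc]
  have hnormsq : ∀ a : ℂ, 0 < a.re →
      Complex.normSq (a - c) < Complex.normSq (a + (starRingEnd ℂ) c) := by
    intro a ha
    simp only [Complex.normSq_apply, Complex.sub_re, Complex.sub_im, Complex.add_re,
      Complex.add_im, Complex.conj_re, Complex.conj_im]
    nlinarith [ha, hcre]
  have hmaps : MapsTo g (ball (0:ℂ) R) (ball (g 0) 1) := by
    intro w hw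
    rw [hg0]
    simp only [mem_ball, dist_eq_norm, sub_zero]
    have hdw := hden w hw
    have h1 : ‖(p w - c)‖ < ‖(p w + (starRingEnd ℂ) c)‖ := by
      have := hnormsq (p w) (hre w hw)
      have e1 : ‖(p w - c)‖ = Real.sqrt (Complex.normSq (p w - c)) := by
        rw [Complex.norm_def]
      have e2 : ‖(p w + (starRingEnd ℂ) c)‖ = Real.sqrt (Complex.normSq (p w + (starRingEnd ℂ) c)) := by
        rw [Complex.norm_def]
      rw [e1, e2]
      exact Real.sqrt_lt_sqrt (Complex.normSq_nonneg _) this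
    have hpos : 0 < ‖(p w + (starRingEnd ℂ) c)‖ := norm_pos_iff.mpr hdw
    rw [hg, norm_div]
    exact (div_lt_one hpos).mpr h1
  have hschwarz := Complex.dist_le_div_mul_dist_of_mapsTo_ball hgd (hmaps.mono_right ball_subset_closedBall) hζ
  rw [hg0] at hschwarz
  simp only [dist_eq_norm, sub_zero] at hschwarz
  have hgζ : ‖g ζ‖ ≤ ‖ζ‖ / R := by
    calc ‖g ζ‖ ≤ 1 / R * ‖ζ‖ := hschwarz
    _ = ‖ζ‖ / R := by ring
  have hgζ1 : ‖g ζ‖ < 1 := lt_of_le_of_lt hgζ (by rw [div_lt_one hR]; exact hζR)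
  -- identity:  p ζ - c = g ζ * (2 c.re) / (1 - g ζ)
  have hdζ := hden ζ hζ
  have hone : (1 : ℂ) - g ζ ≠ 0 := by
    intro hcontra
    have : ‖(1:ℂ) - g ζ‖ = 0 := by rw [hcontra]; simp
    have h1 : (1:ℝ) - ‖g ζ‖ ≤ ‖(1:ℂ) - g ζ‖ := by
      have := norm_sub_norm_le (1:ℂ) (g ζ)
      simpa using this
    rw [this] at h1
    linarith
  have hid : p ζ - c = g ζ * (2 * c.re) / (1 - g ζ) := by
    have hgmul : g ζ * (p ζ + (starRingEnd ℂ) c) = p ζ - c := by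
      exact div_mul_cancel₀ _ hdζ
    have hexp : (p ζ - c) * (1 - g ζ) = g ζ * (2 * c.re) := by
      have hcc : c + (starRingEnd ℂ) c = (2 * c.re : ℝ) := by
        rw [Complex.add_conj]
      calc (p ζ - c) * (1 - g ζ) = (p ζ - c) - g ζ * (p ζ - c) := by ring
      _ = g ζ * (p ζ + (starRingEnd ℂ) c) - g ζ * (p ζ - c) := by rw [hgmul]
      _ = g ζ * (c + (starRingEnd ℂ) c) := by ring
      _ = g ζ * (2 * c.re) := by rw [hcc]; norm_num
    field_simp at hexp ⊢
    linear_combination hexp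
  have hnorm1g : 1 - ‖ζ‖/R ≤ ‖(1:ℂ) - g ζ‖ := by
    have := norm_sub_norm_le (1:ℂ) (g ζ)
    simp only [norm_one] at this
    linarith
  have hpos1g : (0:ℝ) < 1 - ‖ζ‖/R := by
    rw [sub_pos, div_lt_one hR]; exact hζR
  calc ‖p ζ - c‖ = ‖g ζ‖ * (2 * c.re) / ‖(1:ℂ) - g ζ‖ := by
        rw [hid, norm_div, norm_mul]
        congr 2
        rw [show ((2:ℂ) * c.re) = ((2 * c.re : ℝ) : ℂ) by push_cast; ring]
        rw [Complex.norm_real, Real.norm_eq_abs, _root_.abs_of_nonneg (by linarith)]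
  _ ≤ (‖ζ‖/R) * (2 * c.re) / (1 - ‖ζ‖/R) := by
        exact div_le_div₀ (by positivity)
          (mul_le_mul_of_nonneg_right hgζ (by linarith)) hpos1g hnorm1g
  _ = 2 * c.re * ‖ζ‖ / (R - ‖ζ‖) := by
        field_simp

lemma herglotz_nonneg {p : ℂ → ℂ} {R : ℝ}
    (hd : DifferentiableOn ℂ p (ball 0 R))
    (hre : ∀ w ∈ ball (0:ℂ) R, 0 ≤ (p w).re)
    {ζ : ℂ} (hζ : ζ ∈ ball (0:ℂ) R) :
    ‖p ζ - p 0‖ ≤ 2 * (p 0).re * ‖ζ‖ / (R - ‖ζ‖) := by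
  rcases eq_or_ne ζ 0 with rfl | hζ0
  · simp
  have hζn : 0 < ‖ζ‖ := norm_pos_iff.mpr hζ0
  have hζR : ‖ζ‖ < R := by simpa [mem_ball, dist_eq_norm] using hζ
  have hRζ : 0 < R - ‖ζ‖ := by linarith
  have key : ∀ δ : ℝ, 0 < δ →
      ‖p ζ - p 0‖ ≤ 2 * ((p 0).re + δ) * ‖ζ‖ / (R - ‖ζ‖) := by
    intro δ hδ
    have hball : (0:ℂ) ∈ ball (0:ℂ) R := by
      simp only [mem_ball, dist_self]; linarith [norm_nonneg ζ]
    have h2 := herglotz_pos (p := fun w => p w + (δ:ℂ))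
      (hd.add (differentiableOn_const _))
      (fun w hw => by
        simp only [Complex.add_re, Complex.ofReal_re]
        have := hre w hw; linarith) hζ
    simp only [add_sub_add_right_eq_sub, Complex.add_re, Complex.ofReal_re] at h2
    exact h2
  apply le_of_forall_pos_le_add
  intro η hη
  have hδ : 0 < η * (R - ‖ζ‖) / (2 * ‖ζ‖) := by positivity
  have h3 := key _ hδ
  have : 2 * ((p 0).re + η * (R - ‖ζ‖) / (2 * ‖ζ‖)) * ‖ζ‖ / (R - ‖ζ‖)
      = 2 * (p 0).re * ‖ζ‖ / (R - ‖ζ‖) + η := by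
    have hne : ‖ζ‖ ≠ 0 := hζn.ne'
    have hne2 : R - ‖ζ‖ ≠ 0 := hRζ.ne'
    field_simp
  linarith [h3, this.le, this.ge]

lemma slice_bound {q : ℕ} (h : Cq q → Cq q)
    (hd : DifferentiableOn ℂ h (ball 0 1)) (h0 : h 0 = 0)
    (hpos : ∀ z ∈ ball (0 : Cq q) 1, z ≠ 0 → 0 < ((inner ℂ (h z) z : ℂ)).re)
    (A : Cq q →L[ℂ] Cq q) (hA : fderiv ℂ h 0 = A)
    (v : Cq q) (hv : v ≠ 0) {ρ : ℝ} (hρ0 : 0 < ρ) (hρv : ρ * ‖v‖ < 1) :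
    ‖(ρ:ℂ)⁻¹ * (inner ℂ v (h ((ρ:ℂ) • v)) : ℂ) - (inner ℂ v (A v) : ℂ)‖
      ≤ 2 * (‖A‖ * ‖v‖^2) * ρ / (1/‖v‖ - ρ) := by
  have hvn : 0 < ‖v‖ := norm_pos_iff.mpr hv
  set R : ℝ := 1/‖v‖ with hR
  have hR0 : 0 < R := by positivity
  have hρR : ρ < R := by
    rw [hR, lt_div_iff₀ hvn]; exact hρv
  have h0R : (0:ℂ) ∈ ball (0:ℂ) R := by simpa using hR0
  set g : ℂ → ℂ := fun ζ => (inner ℂ v (h (ζ • v)) : ℂ) with hg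
  have hmem : ∀ ζ : ℂ, ζ ∈ ball (0:ℂ) R → ζ • v ∈ ball (0 : Cq q) 1 := by
    intro ζ hζ
    rw [mem_ball_zero_iff] at hζ ⊢
    rw [norm_smul]
    calc ‖ζ‖ * ‖v‖ < R * ‖v‖ := by
          exact mul_lt_mul_of_pos_right hζ hvn
    _ = 1 := by rw [hR]; field_simp
  have hgd : DifferentiableOn ℂ g (ball 0 R) := by
    intro ζ hζ
    have h1 : DifferentiableAt ℂ (fun ζ:ℂ => ζ • v) ζ := (differentiable_id.smul_const v) ζ
    have h2 : DifferentiableAt ℂ h (ζ • v) :=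
      hd.differentiableAt (isOpen_ball.mem_nhds (hmem ζ hζ))
    exact (((innerSL ℂ v).differentiableAt).comp ζ (h2.comp ζ h1)).differentiableWithinAt
  set φ : ℂ → ℂ := dslope g 0 with hφ
  have hφd : DifferentiableOn ℂ φ (ball 0 R) :=
    (differentiableOn_dslope (isOpen_ball.mem_nhds h0R)).mpr hgd
  have hg0 : g 0 = 0 := by simp [hg, h0]
  have hball01 : (0 : Cq q) ∈ ball (0 : Cq q) 1 := by simp
  have hfd : HasFDerivAt h A 0 := by
    rw [← hA]
    exact (hd.differentiableAt (isOpen_ball.mem_nhds hball01)).hasFDerivAt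
  have hderiv : HasDerivAt g ((inner ℂ v (A v) : ℂ)) 0 := by
    have hsmul : HasDerivAt (fun ζ:ℂ => ζ • v) v 0 := by
      simpa using (hasDerivAt_id (0:ℂ)).smul_const v
    have hfd' : HasFDerivAt h A ((0:ℂ) • v) := by rw [zero_smul]; exact hfd
    have hcomp : HasDerivAt (fun ζ:ℂ => h (ζ • v)) (A v) 0 :=
      hfd'.comp_hasDerivAt 0 hsmul
    exact (innerSL ℂ v).hasFDerivAt.comp_hasDerivAt 0 hcomp
  have hφ0 : φ 0 = (inner ℂ v (A v) : ℂ) := by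
    rw [hφ, dslope_same]; exact hderiv.deriv
  have hφne : ∀ ζ : ℂ, ζ ≠ 0 → φ ζ = g ζ / ζ := by
    intro ζ hζ0
    rw [hφ, dslope_of_ne g hζ0, slope_def_field, hg0, sub_zero, sub_zero]
  have hre' : ∀ ζ ∈ ball (0:ℂ) R, ζ ≠ 0 → 0 < (φ ζ).re := by
    intro ζ hζ hζ0
    rw [hφne ζ hζ0]
    have e1 : (inner ℂ (ζ • v) (h (ζ • v)) : ℂ) = (starRingEnd ℂ) ζ * g ζ := by
      rw [hg]; exact inner_smul_left _ _ _
    have e2 : g ζ / ζ = ((Complex.normSq ζ)⁻¹ : ℝ) * ((starRingEnd ℂ) ζ * g ζ) := by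
      rw [div_eq_mul_inv, Complex.inv_def]
      push_cast
      ring
    rw [e2, ← e1, Complex.re_ofReal_mul]
    apply mul_pos
    · rw [inv_pos]; exact Complex.normSq_pos.mpr hζ0
    · have hw0 : ζ • v ≠ 0 := smul_ne_zero hζ0 hv
      have := hpos (ζ • v) (hmem ζ hζ) hw0
      have hconj : ((inner ℂ (ζ • v) (h (ζ • v)) : ℂ)).re
          = ((inner ℂ (h (ζ • v)) (ζ • v) : ℂ)).re := by
        rw [← inner_conj_symm (𝕜 := ℂ) (h (ζ • v)) (ζ • v)]
        exact Complex.conj_re _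
      rw [hconj]; exact this
  have hre : ∀ ζ ∈ ball (0:ℂ) R, 0 ≤ (φ ζ).re := by
    intro ζ hζ
    rcases eq_or_ne ζ 0 with rfl | hζ0
    · have hcont : ContinuousAt φ 0 :=
        (hφd.differentiableAt (isOpen_ball.mem_nhds h0R)).continuousAt
      have hfil : ∀ᶠ w in nhdsWithin (0:ℂ) {(0:ℂ)}ᶜ, 0 ≤ (φ w).re := by
        have hball : ball (0:ℂ) R ∈ nhdsWithin (0:ℂ) {(0:ℂ)}ᶜ :=
          nhdsWithin_le_nhds (isOpen_ball.mem_nhds h0R)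
        filter_upwards [hball, self_mem_nhdsWithin] with w h1 h2
        exact (hre' w h1 h2).le
      exact ge_of_tendsto (((Complex.continuous_re.continuousAt).comp hcont).mono_left
        nhdsWithin_le_nhds) hfil
    · exact (hre' ζ hζ hζ0).le
  have hρmem : (ρ:ℂ) ∈ ball (0:ℂ) R := by
    rw [mem_ball_zero_iff, Complex.norm_real, Real.norm_eq_abs, abs_of_pos hρ0]; exact hρR
  have hbound := herglotz_nonneg hφd hre hρmem
  have hρc0 : (ρ:ℂ) ≠ 0 := by exact_mod_cast hρ0.ne'
  have hφρ : φ (ρ:ℂ) = (ρ:ℂ)⁻¹ * (inner ℂ v (h ((ρ:ℂ) • v)) : ℂ) := by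
    rw [hφne _ hρc0, hg, div_eq_inv_mul]
  have hnρ : ‖(ρ:ℂ)‖ = ρ := by rw [Complex.norm_real, Real.norm_eq_abs, abs_of_pos hρ0]
  rw [hφρ, hφ0, hnρ] at hbound
  have hreA : (φ 0).re ≤ ‖A‖ * ‖v‖^2 := by
    rw [hφ0]
    calc ((inner ℂ v (A v) : ℂ)).re ≤ ‖(inner ℂ v (A v) : ℂ)‖ := Complex.re_le_norm _
    _ ≤ ‖v‖ * ‖A v‖ := norm_inner_le_norm _ _
    _ ≤ ‖v‖ * (‖A‖ * ‖v‖) := by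
        exact mul_le_mul_of_nonneg_left (A.le_opNorm v) (norm_nonneg v)
    _ = ‖A‖ * ‖v‖^2 := by ring
  have hre0 : 0 ≤ (φ 0).re := hre 0 h0R
  rw [hφ0] at hreA hre0
  calc ‖(ρ:ℂ)⁻¹ * (inner ℂ v (h ((ρ:ℂ) • v)) : ℂ) - (inner ℂ v (A v) : ℂ)‖
      ≤ 2 * ((inner ℂ v (A v) : ℂ)).re * ρ / (R - ρ) := hbound
  _ ≤ 2 * (‖A‖ * ‖v‖^2) * ρ / (R - ρ) := by
      have hRρ : (0:ℝ) < R - ρ := by linarith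
      gcongr
  _ = 2 * (‖A‖ * ‖v‖^2) * ρ / (1/‖v‖ - ρ) := by rw [hR]

/-- Graham–Hamada–Kohr–Kohr estimate: for `h ∈ 𝒩` with differential `A` at `0`,
`|h(z)| ≤ 4r/(1-r)²·‖A‖` for `|z| ≤ r < 1`. -/
theorem statement13 (q : ℕ) (hq : 1 ≤ q) (h : Cq q → Cq q) (hN : MemN q h)
    (A : Cq q →L[ℂ] Cq q) (hA : fderiv ℂ h 0 = A) :
    ∀ r : ℝ, 0 ≤ r → r < 1 → ∀ z : Cq q, ‖z‖ ≤ r →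
      ‖h z‖ ≤ 4 * r / (1 - r) ^ 2 * ‖A‖ := by
  obtain ⟨hd, h0, hposN⟩ := hN
  have hpos : ∀ w ∈ ball (0 : Cq q) 1, w ≠ 0 → 0 < ((inner ℂ (h w) w : ℂ)).re :=
    fun w hw hw0 => hposN w hw hw0
  intro r hr0 hr1 z hzr
  have hRHS0 : 0 ≤ 4 * r / (1 - r)^2 * ‖A‖ :=
    mul_nonneg (div_nonneg (by linarith) (sq_nonneg _)) (norm_nonneg _)
  rcases eq_or_ne z 0 with rfl | hz0
  · rw [h0]; simpa using hRHS0
  set ρ := ‖z‖ with hρ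
  have hρ0 : 0 < ρ := norm_pos_iff.mpr hz0
  have hρr : ρ ≤ r := hzr
  have hρ1 : ρ < 1 := lt_of_le_of_lt hρr hr1
  have hρc : ((ρ:ℝ):ℂ) ≠ 0 := by exact_mod_cast hρ0.ne'
  -- unit radial vector
  set u : Cq q := (ρ:ℂ)⁻¹ • z with hu
  have hun : ‖u‖ = 1 := by
    rw [hu, norm_smul, norm_inv, Complex.norm_real, Real.norm_eq_abs, abs_of_pos hρ0]
    field_simp
    exact hρ.symm
  have hzu : (ρ:ℂ) • u = z := by rw [hu, smul_inv_smul₀ hρc]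
  have hu0 : u ≠ 0 := by
    intro hc; rw [hc, norm_zero] at hun; exact one_ne_zero hun.symm
  set α : ℂ := (inner ℂ u (h z) : ℂ) with hα
  set w' : Cq q := h z - α • u with hw'
  have hdecomp : h z = α • u + w' := by rw [hw']; abel
  have huu : (inner ℂ u u : ℂ) = 1 := by
    rw [inner_self_eq_norm_sq_to_K, hun]; norm_num
  have huw' : (inner ℂ u w' : ℂ) = 0 := by
    rw [hw', inner_sub_right, inner_smul_right, huu, mul_one, ← hα, sub_self]
  -- radial bound
  have hradial := slice_bound h hd h0 hpos A hA u hu0 hρ0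
    (by rw [hun, mul_one]; exact hρ1)
  rw [hzu, hun] at hradial
  have hAu : ‖(inner ℂ u (A u) : ℂ)‖ ≤ ‖A‖ := by
    calc ‖(inner ℂ u (A u) : ℂ)‖ ≤ ‖u‖ * ‖A u‖ := norm_inner_le_norm _ _
    _ ≤ ‖u‖ * (‖A‖ * ‖u‖) := mul_le_mul_of_nonneg_left (A.le_opNorm u) (norm_nonneg u)
    _ = ‖A‖ := by rw [hun]; ring
  have hαbound : ‖α‖ ≤ ρ * (‖A‖ + 2*‖A‖*ρ/(1-ρ)) := by
    have h1 : ‖(ρ:ℂ)⁻¹ * α‖ ≤ ‖A‖ + 2*‖A‖*ρ/(1-ρ) := by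
      calc ‖(ρ:ℂ)⁻¹ * α‖
          = ‖((ρ:ℂ)⁻¹ * α - (inner ℂ u (A u) : ℂ)) + (inner ℂ u (A u) : ℂ)‖ := by
            congr 1; ring
      _ ≤ ‖(ρ:ℂ)⁻¹ * α - (inner ℂ u (A u) : ℂ)‖ + ‖(inner ℂ u (A u) : ℂ)‖ := norm_add_le _ _
      _ ≤ 2 * (‖A‖ * 1^2) * ρ / (1/1 - ρ) + ‖A‖ := add_le_add hradial hAu
      _ = ‖A‖ + 2*‖A‖*ρ/(1-ρ) := by norm_num; ring
    calc ‖α‖ = ‖(ρ:ℂ) * ((ρ:ℂ)⁻¹ * α)‖ := by rw [mul_inv_cancel_left₀ hρc]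
    _ = ρ * ‖(ρ:ℂ)⁻¹ * α‖ := by
        rw [norm_mul, Complex.norm_real, Real.norm_eq_abs, abs_of_pos hρ0]
    _ ≤ ρ * (‖A‖ + 2*‖A‖*ρ/(1-ρ)) := mul_le_mul_of_nonneg_left h1 hρ0.le
  -- tangential setup
  set ε : ℝ := 1 - ρ with hε
  have hε0 : 0 < ε := by rw [hε]; linarith
  set s : ℝ := Real.sqrt (1 + ε^2) with hs
  have hs2 : s^2 = 1 + ε^2 := Real.sq_sqrt (by positivity)
  have hs0 : 0 < s := Real.sqrt_pos.mpr (by positivity)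
  have hρs : ρ * s < 1 := rho_s_lt_one hρ0 hρ1 hs0 (by rw [hs2, hε])
  have hinvs : 0 < 1/s - ρ := by
    rw [sub_pos, lt_div_iff₀ hs0]; nlinarith [hρs]
  have hW : ‖w'‖ ≤ ρ * (‖A‖ + (2*(‖A‖*s^2)*ρ/(1/s - ρ))/ε) := by
    rcases eq_or_ne w' 0 with hw0 | hw0
    · rw [hw0, norm_zero]; positivity
    · set b : Cq q := ((‖w'‖:ℝ):ℂ)⁻¹ • w' with hb
      have hwn : 0 < ‖w'‖ := norm_pos_iff.mpr hw0
      have hwc : ((‖w'‖:ℝ):ℂ) ≠ 0 := by exact_mod_cast hwn.ne'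
      have hbn : ‖b‖ = 1 := by
        rw [hb, norm_smul, norm_inv, Complex.norm_real, Real.norm_eq_abs,
          abs_of_pos hwn]
        field_simp
      have hub : (inner ℂ u b : ℂ) = 0 := by
        rw [hb, inner_smul_right, huw', mul_zero]
      have hbu : (inner ℂ b u : ℂ) = 0 := by
        rw [← inner_conj_symm, hub, map_zero]
      have hbw' : (inner ℂ b w' : ℂ) = (‖w'‖:ℂ) := by
        rw [hb, inner_smul_left, inner_self_eq_norm_sq_to_K, map_inv₀,
          Complex.conj_ofReal]
        field_simp
        rfl
      have hbhz : (inner ℂ b (h z) : ℂ) = (‖w'‖:ℂ) := by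
        rw [hdecomp, inner_add_right, inner_smul_right, hbu, mul_zero, zero_add, hbw']
      have hbA : ‖(inner ℂ b (A u) : ℂ)‖ ≤ ‖A‖ := by
        calc ‖(inner ℂ b (A u) : ℂ)‖ ≤ ‖b‖ * ‖A u‖ := norm_inner_le_norm _ _
        _ ≤ ‖b‖ * (‖A‖ * ‖u‖) := mul_le_mul_of_nonneg_left (A.le_opNorm u) (norm_nonneg b)
        _ = ‖A‖ := by rw [hbn, hun]; ring
      -- geometry of u + x • b
      have hvx : ∀ x : ℂ, ‖u + x • b‖^2 = 1 + ‖x‖^2 := by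
        intro x
        rw [norm_add_sq (𝕜 := ℂ) u (x • b), inner_smul_right, hub, mul_zero]
        simp [hun, hbn, norm_smul]
      have hvs : ∀ x : ℂ, ‖x‖ ≤ ε → ‖u + x • b‖ ≤ s := by
        intro x hx
        have e : ‖u + x • b‖ = Real.sqrt (1 + ‖x‖^2) := by
          rw [← hvx x, Real.sqrt_sq (norm_nonneg _)]
        rw [e, hs]
        apply Real.sqrt_le_sqrt
        have := pow_le_pow_left₀ (norm_nonneg x) hx 2
        linarith
      have hvxe : ∀ x : ℂ, ‖x‖ = ε → ‖u + x • b‖ = s := by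
        intro x hx
        have e : ‖u + x • b‖ = Real.sqrt (1 + ‖x‖^2) := by
          rw [← hvx x, Real.sqrt_sq (norm_nonneg _)]
        rw [e, hs, hx]
      have hvne : ∀ x : ℂ, u + x • b ≠ 0 := by
        intro x hc
        have := hvx x
        rw [hc, norm_zero] at this
        nlinarith [sq_nonneg ‖x‖]
      have hmemball : ∀ x : ℂ, ‖x‖ ≤ ε → ((ρ:ℂ) • (u + x • b)) ∈ ball (0 : Cq q) 1 := by
        intro x hx
        rw [mem_ball_zero_iff, norm_smul, Complex.norm_real, Real.norm_eq_abs,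
          abs_of_pos hρ0]
        calc ρ * ‖u + x • b‖ ≤ ρ * s := mul_le_mul_of_nonneg_left (hvs x hx) hρ0.le
        _ < 1 := hρs
      have haff : Differentiable ℂ (fun x : ℂ => u + x • b) :=
        (differentiable_const u).add (differentiable_id.smul_const b)
      set P : ℂ → ℂ := fun x =>
        (ρ:ℂ)⁻¹ * (inner ℂ u (h ((ρ:ℂ) • (u + x • b))) : ℂ)
          - (inner ℂ u (A (u + x • b)) : ℂ) with hP
      set Q : ℂ → ℂ := fun x =>
        (ρ:ℂ)⁻¹ * (inner ℂ b (h ((ρ:ℂ) • (u + x • b))) : ℂ)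
          - (inner ℂ b (A (u + x • b)) : ℂ) with hQ
      have hdiff : ∀ c : Cq q, DifferentiableOn ℂ (fun x : ℂ =>
          (ρ:ℂ)⁻¹ * (inner ℂ c (h ((ρ:ℂ) • (u + x • b))) : ℂ)
            - (inner ℂ c (A (u + x • b)) : ℂ)) (closedBall 0 ε) := by
        intro c x hx
        have hxe : ‖x‖ ≤ ε := by simpa [mem_closedBall, dist_zero_right] using hx
        have hhx : DifferentiableAt ℂ h ((ρ:ℂ) • (u + x • b)) :=
          hd.differentiableAt (isOpen_ball.mem_nhds (hmemball x hxe))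
        have h1 : DifferentiableAt ℂ
            (fun x : ℂ => (inner ℂ c (h ((ρ:ℂ) • (u + x • b))) : ℂ)) x :=
          ((innerSL ℂ c).differentiableAt).comp x
            (hhx.comp x ((haff x).const_smul (ρ:ℂ)))
        have h2 : DifferentiableAt ℂ
            (fun x : ℂ => (inner ℂ c (A (u + x • b)) : ℂ)) x :=
          ((innerSL ℂ c).differentiableAt).comp x
            ((A.differentiable.differentiableAt).comp x (haff x))
        exact (((differentiableAt_const _).mul h1).sub h2).differentiableWithinAt
      have hMx : ∀ x : ℂ, ‖x‖ = ε →
          ‖P x + (starRingEnd ℂ) x * Q x‖ ≤ 2*(‖A‖*s^2)*ρ/(1/s - ρ) := by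
        intro x hx
        have hsb := slice_bound h hd h0 hpos A hA (u + x • b) (hvne x) hρ0
          (by rw [hvxe x hx]; exact hρs)
        rw [hvxe x hx] at hsb
        have hid : (ρ:ℂ)⁻¹ * (inner ℂ (u + x • b) (h ((ρ:ℂ) • (u + x • b))) : ℂ)
            - (inner ℂ (u + x • b) (A (u + x • b)) : ℂ)
            = P x + (starRingEnd ℂ) x * Q x := by
          rw [hP, hQ]
          simp only [inner_add_left, inner_smul_left]
          ring
        rw [hid] at hsb
        exact hsb
      have hQ0 := extractQ hε0 P Q (hdiff u) (hdiff b) hMx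
      have hQ0v : Q 0 = (ρ:ℂ)⁻¹ * (‖w'‖:ℂ) - (inner ℂ b (A u) : ℂ) := by
        rw [hQ]
        simp only [zero_smul, add_zero, hzu, hbhz]
      have hwval : (ρ:ℂ)⁻¹ * (‖w'‖:ℂ) = Q 0 + (inner ℂ b (A u) : ℂ) := by
        rw [hQ0v]; ring
      calc ‖w'‖ = ρ * ‖(ρ:ℂ)⁻¹ * (‖w'‖:ℂ)‖ := by
            rw [norm_mul, norm_inv, Complex.norm_real, Complex.norm_real,
              Real.norm_eq_abs, Real.norm_eq_abs, abs_of_pos hρ0, abs_of_pos hwn]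
            field_simp
      _ = ρ * ‖Q 0 + (inner ℂ b (A u) : ℂ)‖ := by rw [hwval]
      _ ≤ ρ * (‖Q 0‖ + ‖(inner ℂ b (A u) : ℂ)‖) :=
            mul_le_mul_of_nonneg_left (norm_add_le _ _) hρ0.le
      _ ≤ ρ * ((2*(‖A‖*s^2)*ρ/(1/s - ρ))/ε + ‖A‖) := by
            apply mul_le_mul_of_nonneg_left _ hρ0.le
            exact add_le_add hQ0 hbA
      _ = ρ * (‖A‖ + (2*(‖A‖*s^2)*ρ/(1/s - ρ))/ε) := by ring
  -- combine
  have htotal : ‖h z‖ ≤ ρ*(‖A‖ + 2*‖A‖*ρ/(1-ρ)) + ρ*(‖A‖ + (2*(‖A‖*s^2)*ρ/(1/s-ρ))/ε) := by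
    calc ‖h z‖ = ‖α • u + w'‖ := by rw [← hdecomp]
    _ ≤ ‖α • u‖ + ‖w'‖ := norm_add_le _ _
    _ = ‖α‖ + ‖w'‖ := by rw [norm_smul, hun, mul_one]
    _ ≤ _ := add_le_add hαbound hW
  have hfin := final_ineq hρ0 hρ1 hs0 (by rw [hs2, hε])
  have hmain : ‖h z‖ ≤ 4 * ρ / (1 - ρ)^2 * ‖A‖ := by
    calc ‖h z‖ ≤ ρ*(‖A‖ + 2*‖A‖*ρ/(1-ρ)) + ρ*(‖A‖ + (2*(‖A‖*s^2)*ρ/(1/s-ρ))/ε) := htotal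
    _ = ρ*‖A‖*(2 + 2*ρ/(1-ρ) + 2*s^2*ρ/((1/s-ρ)*(1-ρ))) := by
        rw [hε]; field_simp; ring
    _ ≤ ρ*‖A‖*(4/(1-ρ)^2) := by
        apply mul_le_mul_of_nonneg_left hfin (by positivity)
    _ = 4 * ρ / (1 - ρ)^2 * ‖A‖ := by ring
  exact le_trans hmain (mono_rhs hρ0 hρr hr1 (norm_nonneg _))
end
end
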